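/- Let Ω ⊆ ℂⁿ (n ≥ 1) be an open convex set and let ρ : ℂⁿ → ℝ be three times continuously differentiable on Ω with all partial derivatives of ρ up to order 3 bounded by M on Ω. Assume there is c > 0 such that the Levi form satisfies L_ρ(ζ; t) := Σ_{i,j=1}^n (∂²ρ/∂ζ_i∂ζ̄_j)(ζ) t_i conj(t_j) ≥ c|t|² for every ζ ∈ Ω and every t ∈ ℂⁿ. Then there exists ε₀ > 0, depending only on n, M and c, such that for all z, ζ ∈ Ω with |z−ζ| < ε₀: Re F(z,ζ) ≥ (ρ(ζ) − ρ(z))/2 + (c/4)|z−ζ|². -/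

import Mathlib

open Complex MeasureTheory
open scoped BigOperators

noncomputable section

/-- The holomorphic Wirtinger derivative `∂f/∂z_j`. -/
def wD {n : ℕ} (j : Fin n) (f : EuclideanSpace ℂ (Fin n) → ℂ)
    (z : EuclideanSpace ℂ (Fin n)) : ℂ :=
  (1 / 2 : ℂ) * (fderiv ℝ f z (EuclideanSpace.single j 1)
    - Complex.I * fderiv ℝ f z (EuclideanSpace.single j Complex.I))

/-- The antiholomorphic Wirtinger derivative `∂f/∂z̄_j`. -/
def wDbar {n : ℕ} (j : Fin n) (f : EuclideanSpace ℂ (Fin n) → ℂ)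
    (z : EuclideanSpace ℂ (Fin n)) : ℂ :=
  (1 / 2 : ℂ) * (fderiv ℝ f z (EuclideanSpace.single j 1)
    + Complex.I * fderiv ℝ f z (EuclideanSpace.single j Complex.I))

/-- A real valued function viewed as a complex valued one. -/
def cval {n : ℕ} (ρ : EuclideanSpace ℂ (Fin n) → ℝ) :
    EuclideanSpace ℂ (Fin n) → ℂ := fun z => (ρ z : ℂ)

/-- The Levi polynomial `F(z, ζ)` of `ρ`:
`F(z,ζ) = Σ_j ∂ρ/∂ζ_j(ζ)(ζ_j − z_j) − ½ Σ_{i,j} ∂²ρ/∂ζ_i∂ζ_j(ζ)(z_i − ζ_i)(z_j − ζ_j)`. -/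
def leviPoly {n : ℕ} (ρ : EuclideanSpace ℂ (Fin n) → ℝ)
    (z ζ : EuclideanSpace ℂ (Fin n)) : ℂ :=
  (∑ j, wD j (cval ρ) ζ * (ζ j - z j))
    - (1 / 2 : ℂ) * ∑ i, ∑ j,
        wD i (fun w => wD j (cval ρ) w) ζ * (z i - ζ i) * (z j - ζ j)

/-- The Levi form `L_ρ(ζ; t) = Σ_{i,j} ∂²ρ/∂ζ_i∂ζ̄_j(ζ) t_i conj(t_j)`. -/
def leviForm {n : ℕ} (ρ : EuclideanSpace ℂ (Fin n) → ℝ)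
    (ζ t : EuclideanSpace ℂ (Fin n)) : ℂ :=
  ∑ i, ∑ j, wD i (fun w => wDbar j (cval ρ) w) ζ * t i * (starRingEnd ℂ) (t j)

/-- Every partial derivative of `ρ` (with respect to the underlying real
coordinates of `ℂⁿ ≅ ℝ^{2n}`) of order at most `m` is bounded in absolute
value by `M` on `Ω`. -/
def partialsBoundedBy {n : ℕ} (m : ℕ) (ρ : EuclideanSpace ℂ (Fin n) → ℝ)
    (Ω : Set (EuclideanSpace ℂ (Fin n))) (M : ℝ) : Prop :=
  ∀ k, k ≤ m → ∀ x ∈ Ω, ∀ v : Fin k → EuclideanSpace ℂ (Fin n),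
    (∀ i, ∃ j, v i = EuclideanSpace.single j 1 ∨ v i = EuclideanSpace.single j Complex.I) →
    |iteratedFDeriv ℝ k ρ x v| ≤ M

section Helpers

variable {n : ℕ} {ρ : EuclideanSpace ℂ (Fin n) → ℝ} {x : EuclideanSpace ℂ (Fin n)}
  {Ω : Set (EuclideanSpace ℂ (Fin n))}
variable {n : ℕ}

variable {ρ : EuclideanSpace ℂ (Fin n) → ℝ} {x : EuclideanSpace ℂ (Fin n)}

lemma fderiv_cval (h : DifferentiableAt ℝ ρ x) (u : EuclideanSpace ℂ (Fin n)) :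
    fderiv ℝ (cval ρ) x u = (fderiv ℝ ρ x u : ℂ) := by
  have : HasFDerivAt (cval ρ) (Complex.ofRealCLM.comp (fderiv ℝ ρ x)) x :=
    Complex.ofRealCLM.hasFDerivAt.comp x h.hasFDerivAt
  rw [this.fderiv]; rfl

lemma wD_cval (h : DifferentiableAt ℝ ρ x) (j : Fin n) :
    wD j (cval ρ) x = (1 / 2 : ℂ) * ((fderiv ℝ ρ x (EuclideanSpace.single j 1) : ℂ)
      - Complex.I * (fderiv ℝ ρ x (EuclideanSpace.single j Complex.I) : ℂ)) := by
  rw [wD, fderiv_cval h, fderiv_cval h]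

lemma wDbar_cval (h : DifferentiableAt ℝ ρ x) (j : Fin n) :
    wDbar j (cval ρ) x = (1 / 2 : ℂ) * ((fderiv ℝ ρ x (EuclideanSpace.single j 1) : ℂ)
      + Complex.I * (fderiv ℝ ρ x (EuclideanSpace.single j Complex.I) : ℂ)) := by
  rw [wDbar, fderiv_cval h, fderiv_cval h]

variable {Ω : Set (EuclideanSpace ℂ (Fin n))}

lemma hasfd (hΩ : IsOpen Ω) (hρ : ContDiffOn ℝ 3 ρ Ω) (hx : x ∈ Ω)
    (u : EuclideanSpace ℂ (Fin n)) :
    HasFDerivAt (fun w => fderiv ℝ ρ w u)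
      ((ContinuousLinearMap.apply ℝ ℝ u).comp (fderiv ℝ (fderiv ℝ ρ) x)) x := by
  have hd2 : DifferentiableAt ℝ (fderiv ℝ ρ) x := by
    have := (hρ.contDiffAt (hΩ.mem_nhds hx)).fderiv_right (m := 1) (by norm_num)
    exact this.differentiableAt one_ne_zero
  exact (ContinuousLinearMap.apply ℝ ℝ u).hasFDerivAt.comp x hd2.hasFDerivAt
open Complex
variable {n : ℕ} {ρ : EuclideanSpace ℂ (Fin n) → ℝ} {x : EuclideanSpace ℂ (Fin n)}
  {Ω : Set (EuclideanSpace ℂ (Fin n))}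

lemma wD2_eq (hΩ : IsOpen Ω) (hρ : ContDiffOn ℝ 3 ρ Ω) (hx : x ∈ Ω) (i j : Fin n) :
    wD i (fun w => wD j (cval ρ) w) x
      = (1/4 : ℂ) * ((fderiv ℝ (fderiv ℝ ρ) x (EuclideanSpace.single i 1) (EuclideanSpace.single j 1) : ℂ)
        - Complex.I * (fderiv ℝ (fderiv ℝ ρ) x (EuclideanSpace.single i 1) (EuclideanSpace.single j Complex.I) : ℂ)
        - Complex.I * (fderiv ℝ (fderiv ℝ ρ) x (EuclideanSpace.single i Complex.I) (EuclideanSpace.single j 1) : ℂ)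
        - (fderiv ℝ (fderiv ℝ ρ) x (EuclideanSpace.single i Complex.I) (EuclideanSpace.single j Complex.I) : ℂ)) := by
  have hev : (fun w => wD j (cval ρ) w) =ᶠ[nhds x]
      (fun w => (1/2 : ℂ) * ((fderiv ℝ ρ w (EuclideanSpace.single j 1) : ℂ)
        - Complex.I * (fderiv ℝ ρ w (EuclideanSpace.single j Complex.I) : ℂ))) := by
    filter_upwards [hΩ.mem_nhds hx] with w hw
    exact wD_cval (((hρ.contDiffAt (hΩ.mem_nhds hw)).differentiableAt (by norm_num))) j
  have hφ := hasfd hΩ hρ hx (EuclideanSpace.single j 1)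
  have hψ := hasfd hΩ hρ hx (EuclideanSpace.single j Complex.I)
  have h1 : HasFDerivAt (fun w => ((fderiv ℝ ρ w (EuclideanSpace.single j 1) : ℝ) : ℂ))
      (Complex.ofRealCLM.comp ((ContinuousLinearMap.apply ℝ ℝ (EuclideanSpace.single j 1)).comp
        (fderiv ℝ (fderiv ℝ ρ) x))) x := Complex.ofRealCLM.hasFDerivAt.comp x hφ
  have h2 : HasFDerivAt (fun w => ((fderiv ℝ ρ w (EuclideanSpace.single j Complex.I) : ℝ) : ℂ))
      (Complex.ofRealCLM.comp ((ContinuousLinearMap.apply ℝ ℝ (EuclideanSpace.single j Complex.I)).comp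
        (fderiv ℝ (fderiv ℝ ρ) x))) x := Complex.ofRealCLM.hasFDerivAt.comp x hψ
  have h4 := ((h1.sub (h2.const_mul Complex.I)).const_mul ((1:ℂ)/2))
  simp only [Pi.sub_apply] at h4
  rw [wD, hev.fderiv_eq, h4.fderiv]
  simp only [ContinuousLinearMap.coe_smul', Pi.smul_apply, ContinuousLinearMap.coe_sub',
    Pi.sub_apply, ContinuousLinearMap.coe_comp', Function.comp_apply,
    ContinuousLinearMap.apply_apply, Complex.ofRealCLM_apply, smul_eq_mul]
  ring_nf
  rw [Complex.I_sq]
  ring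

lemma wDbar2_eq (hΩ : IsOpen Ω) (hρ : ContDiffOn ℝ 3 ρ Ω) (hx : x ∈ Ω) (i j : Fin n) :
    wD i (fun w => wDbar j (cval ρ) w) x
      = (1/4 : ℂ) * ((fderiv ℝ (fderiv ℝ ρ) x (EuclideanSpace.single i 1) (EuclideanSpace.single j 1) : ℂ)
        + Complex.I * (fderiv ℝ (fderiv ℝ ρ) x (EuclideanSpace.single i 1) (EuclideanSpace.single j Complex.I) : ℂ)
        - Complex.I * (fderiv ℝ (fderiv ℝ ρ) x (EuclideanSpace.single i Complex.I) (EuclideanSpace.single j 1) : ℂ)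
        + (fderiv ℝ (fderiv ℝ ρ) x (EuclideanSpace.single i Complex.I) (EuclideanSpace.single j Complex.I) : ℂ)) := by
  have hev : (fun w => wDbar j (cval ρ) w) =ᶠ[nhds x]
      (fun w => (1/2 : ℂ) * ((fderiv ℝ ρ w (EuclideanSpace.single j 1) : ℂ)
        + Complex.I * (fderiv ℝ ρ w (EuclideanSpace.single j Complex.I) : ℂ))) := by
    filter_upwards [hΩ.mem_nhds hx] with w hw
    exact wDbar_cval (((hρ.contDiffAt (hΩ.mem_nhds hw)).differentiableAt (by norm_num))) j
  have hφ := hasfd hΩ hρ hx (EuclideanSpace.single j 1)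
  have hψ := hasfd hΩ hρ hx (EuclideanSpace.single j Complex.I)
  have h1 : HasFDerivAt (fun w => ((fderiv ℝ ρ w (EuclideanSpace.single j 1) : ℝ) : ℂ))
      (Complex.ofRealCLM.comp ((ContinuousLinearMap.apply ℝ ℝ (EuclideanSpace.single j 1)).comp
        (fderiv ℝ (fderiv ℝ ρ) x))) x := Complex.ofRealCLM.hasFDerivAt.comp x hφ
  have h2 : HasFDerivAt (fun w => ((fderiv ℝ ρ w (EuclideanSpace.single j Complex.I) : ℝ) : ℂ))
      (Complex.ofRealCLM.comp ((ContinuousLinearMap.apply ℝ ℝ (EuclideanSpace.single j Complex.I)).comp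
        (fderiv ℝ (fderiv ℝ ρ) x))) x := Complex.ofRealCLM.hasFDerivAt.comp x hψ
  have h4 := ((h1.add (h2.const_mul Complex.I)).const_mul ((1:ℂ)/2))
  simp only [Pi.add_apply] at h4
  rw [wD, hev.fderiv_eq, h4.fderiv]
  simp only [ContinuousLinearMap.coe_smul', Pi.smul_apply, ContinuousLinearMap.coe_add',
    Pi.add_apply, ContinuousLinearMap.coe_comp', Function.comp_apply,
    ContinuousLinearMap.apply_apply, Complex.ofRealCLM_apply, smul_eq_mul]
  ring_nf
  rw [Complex.I_sq]
  ring

lemma sumE_apply {ι : Type*} [Fintype ι] [DecidableEq ι] (g : ι → EuclideanSpace ℂ (Fin n)) (k : Fin n) :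
    (∑ i, g i) k = ∑ i, g i k := by
  induction (Finset.univ : Finset ι) using Finset.induction_on with
  | empty => rfl
  | insert a s h ih => rw [Finset.sum_insert h, Finset.sum_insert h, ← ih]; rfl

lemma decompE (v : EuclideanSpace ℂ (Fin n)) :
    v = ∑ i, ((v i).re • EuclideanSpace.single i (1:ℂ) + (v i).im • EuclideanSpace.single i Complex.I) := by
  ext k
  rw [sumE_apply]
  have : ∀ i, ((v i).re • EuclideanSpace.single i (1:ℂ) + (v i).im • EuclideanSpace.single i Complex.I) k
      = if k = i then v i else 0 := by
    intro i
    have h1 : ((v i).re • EuclideanSpace.single i (1:ℂ)) k = (v i).re • (EuclideanSpace.single i (1:ℂ) k) := rfl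
    have h2 : ((v i).im • EuclideanSpace.single i (I:ℂ)) k = (v i).im • (EuclideanSpace.single i (I:ℂ) k) := rfl
    show ((v i).re • EuclideanSpace.single i (1:ℂ)) k + ((v i).im • EuclideanSpace.single i (I:ℂ)) k = _
    rw [h1, h2, EuclideanSpace.single_apply, EuclideanSpace.single_apply]
    by_cases h : k = i <;> simp [h, Complex.ext_iff]
  simp [this]

lemma lin_expand (L : EuclideanSpace ℂ (Fin n) →L[ℝ] ℝ) (v : EuclideanSpace ℂ (Fin n)) :
    L v = ∑ j, ((v j).re * L (EuclideanSpace.single j 1)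
      + (v j).im * L (EuclideanSpace.single j Complex.I)) := by
  conv_lhs => rw [decompE v]
  rw [map_sum]
  simp only [map_add, _root_.map_smul, smul_eq_mul]

lemma first_order (h : DifferentiableAt ℝ ρ x) (v : EuclideanSpace ℂ (Fin n)) :
    fderiv ℝ ρ x v = 2 * (∑ j, wD j (cval ρ) x * v j).re := by
  rw [lin_expand, Complex.re_sum, Finset.mul_sum]
  refine Finset.sum_congr rfl fun j _ => ?_
  rw [wD_cval h j]
  simp only [Complex.mul_re, Complex.mul_im, Complex.sub_re, Complex.sub_im, Complex.I_re,
    Complex.I_im, Complex.ofReal_re, Complex.ofReal_im, Complex.div_re, Complex.div_im,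
    Complex.one_re, Complex.one_im, Complex.normSq]
  norm_num
  ring

lemma bilin_expand (T : EuclideanSpace ℂ (Fin n) →L[ℝ] EuclideanSpace ℂ (Fin n) →L[ℝ] ℝ)
    (v : EuclideanSpace ℂ (Fin n)) :
    T v v = ∑ i, ∑ j,
      ((v i).re * (v j).re * T (EuclideanSpace.single i 1) (EuclideanSpace.single j 1)
        + (v i).re * (v j).im * T (EuclideanSpace.single i 1) (EuclideanSpace.single j Complex.I)
        + (v i).im * (v j).re * T (EuclideanSpace.single i Complex.I) (EuclideanSpace.single j 1)
        + (v i).im * (v j).im * T (EuclideanSpace.single i Complex.I) (EuclideanSpace.single j Complex.I)) := by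
  have houter : T v v = ∑ i, ((v i).re * T (EuclideanSpace.single i 1) v
      + (v i).im * T (EuclideanSpace.single i Complex.I) v) := by
    have := lin_expand ((ContinuousLinearMap.apply ℝ ℝ v).comp T) v
    simpa using this
  rw [houter]
  refine Finset.sum_congr rfl fun i _ => ?_
  rw [lin_expand (T (EuclideanSpace.single i 1)) v,
    lin_expand (T (EuclideanSpace.single i Complex.I)) v, Finset.mul_sum, Finset.mul_sum,
    ← Finset.sum_add_distrib]
  refine Finset.sum_congr rfl fun j _ => ?_
  ring

lemma second_order (hΩ : IsOpen Ω) (hρ : ContDiffOn ℝ 3 ρ Ω) (hx : x ∈ Ω)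
    (v : EuclideanSpace ℂ (Fin n)) :
    fderiv ℝ (fderiv ℝ ρ) x v v
      = 2 * (∑ i, ∑ j, wD i (fun w => wD j (cval ρ) w) x * v i * v j).re
        + 2 * (∑ i, ∑ j, wD i (fun w => wDbar j (cval ρ) w) x * v i * (starRingEnd ℂ) (v j)).re := by
  rw [bilin_expand, Complex.re_sum, Complex.re_sum, Finset.mul_sum, Finset.mul_sum,
    ← Finset.sum_add_distrib]
  refine Finset.sum_congr rfl fun i _ => ?_
  rw [Complex.re_sum, Complex.re_sum, Finset.mul_sum, Finset.mul_sum, ← Finset.sum_add_distrib]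
  refine Finset.sum_congr rfl fun j _ => ?_
  rw [wD2_eq hΩ hρ hx i j, wDbar2_eq hΩ hρ hx i j]
  simp only [Complex.mul_re, Complex.mul_im, Complex.sub_re, Complex.sub_im, Complex.add_re,
    Complex.add_im, Complex.I_re, Complex.I_im, Complex.ofReal_re, Complex.ofReal_im,
    Complex.div_re, Complex.div_im, Complex.one_re, Complex.one_im, Complex.normSq,
    RingHom.coe_mk, MonoidHom.coe_mk, OneHom.coe_mk, Complex.conj_re, Complex.conj_im]
  norm_num
  ring

lemma coordAbs_le (v : EuclideanSpace ℂ (Fin n)) (i : Fin n) : ‖v i‖ ≤ ‖v‖ := by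
  rw [EuclideanSpace.norm_eq, ← Real.sqrt_sq (norm_nonneg (v i))]
  exact Real.sqrt_le_sqrt (Finset.single_le_sum (f := fun j => ‖v j‖ ^ 2)
    (fun j _ => sq_nonneg _) (Finset.mem_univ i))

lemma third_bound {M : ℝ} (hB : partialsBoundedBy 3 ρ Ω M) (hx : x ∈ Ω)
    (v : EuclideanSpace ℂ (Fin n)) :
    |iteratedFDeriv ℝ 3 ρ x (fun _ => v)| ≤ 8 * n ^ 3 * (|M| + 1) * ‖v‖ ^ 3 := by
  classical
  set m := iteratedFDeriv ℝ 3 ρ x with hm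
  set cc : Fin n × Bool → ℝ := fun p => if p.2 then (v p.1).im else (v p.1).re with hcc
  set bb : Fin n × Bool → EuclideanSpace ℂ (Fin n) :=
    fun p => if p.2 then EuclideanSpace.single p.1 Complex.I
      else EuclideanSpace.single p.1 1 with hbb
  have hv : v = ∑ p : Fin n × Bool, cc p • bb p := by
    rw [Fintype.sum_prod_type]
    have : ∀ i : Fin n, ∑ b : Bool, cc (i, b) • bb (i, b)
        = (v i).re • EuclideanSpace.single i (1:ℂ) + (v i).im • EuclideanSpace.single i Complex.I := by
      intro i
      rw [Fintype.sum_bool]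
      simp [hcc, hbb, add_comm]
    rw [Finset.sum_congr rfl fun i _ => this i]
    exact decompE v
  have hexp : m (fun _ : Fin 3 => v)
      = ∑ r : Fin 3 → Fin n × Bool, (∏ s, cc (r s)) • m (fun s => bb (r s)) := by
    conv_lhs => rw [show (fun _ : Fin 3 => v) = (fun _ : Fin 3 => ∑ p : Fin n × Bool, cc p • bb p)
      from funext fun _ => hv]
    rw [m.map_sum]
    exact Finset.sum_congr rfl fun r _ => m.map_smul_univ _ _
  rw [hexp]
  have hcoord : ∀ p : Fin n × Bool, |cc p| ≤ ‖v‖ := by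
    intro p
    have h1 : ‖v p.1‖ ≤ ‖v‖ := coordAbs_le v p.1
    rcases p with ⟨i, b⟩
    cases b <;> simp only [hcc]
    · exact le_trans (Complex.abs_re_le_norm _) h1
    · exact le_trans (Complex.abs_im_le_norm _) h1
  have hterm : ∀ r : Fin 3 → Fin n × Bool,
      |(∏ s, cc (r s)) • m (fun s => bb (r s))| ≤ ‖v‖ ^ 3 * (|M| + 1) := by
    intro r
    rw [smul_eq_mul, abs_mul]
    have h1 : |∏ s, cc (r s)| ≤ ‖v‖ ^ 3 := by
      rw [Finset.abs_prod]
      calc ∏ s, |cc (r s)| ≤ ∏ _s : Fin 3, ‖v‖ :=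
            Finset.prod_le_prod (fun s _ => abs_nonneg _) (fun s _ => hcoord (r s))
        _ = ‖v‖ ^ 3 := by rw [Finset.prod_const]; simp
    have h2 : |m (fun s => bb (r s))| ≤ |M| + 1 := by
      have := hB 3 le_rfl x hx (fun s => bb (r s)) (fun s => by
        refine ⟨(r s).1, ?_⟩
        by_cases h : (r s).2 <;> simp [hbb, h])
      calc |m (fun s => bb (r s))| ≤ M := this
        _ ≤ |M| + 1 := by have := le_abs_self M; linarith
    exact mul_le_mul h1 h2 (abs_nonneg _) (pow_nonneg (norm_nonneg v) 3)
  calc |∑ r : Fin 3 → Fin n × Bool, (∏ s, cc (r s)) • m (fun s => bb (r s))|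
      ≤ ∑ r : Fin 3 → Fin n × Bool, |(∏ s, cc (r s)) • m (fun s => bb (r s))| :=
        Finset.abs_sum_le_sum_abs _ _
    _ ≤ ∑ _r : Fin 3 → Fin n × Bool, ‖v‖ ^ 3 * (|M| + 1) :=
        Finset.sum_le_sum fun r _ => hterm r
    _ = (Fintype.card (Fin 3 → Fin n × Bool) : ℝ) * (‖v‖ ^ 3 * (|M| + 1)) := by
        rw [Finset.sum_const]; simp [nsmul_eq_mul]
    _ = 8 * n ^ 3 * (|M| + 1) * ‖v‖ ^ 3 := by
        rw [Fintype.card_fun]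
        simp [Fintype.card_prod]
        ring

lemma hGstep (hΩ : IsOpen Ω) (hρ : ContDiffOn ℝ 3 ρ Ω) (ζ v : EuclideanSpace ℂ (Fin n))
    {k : ℕ} (hk : k ≤ 2) {s : ℝ} (hmem : ζ + s • v ∈ Ω) :
    HasDerivAt (fun t : ℝ => iteratedFDeriv ℝ k ρ (ζ + t • v) (fun _ => v))
      (iteratedFDeriv ℝ (k+1) ρ (ζ + s • v) (fun _ => v)) s := by
  have hγ : HasDerivAt (fun t : ℝ => ζ + t • v) v s := by
    have h0 : HasDerivAt (fun t : ℝ => t • v) ((1:ℝ) • v) s := (hasDerivAt_id s).smul_const v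
    rw [one_smul] at h0
    exact h0.const_add ζ
  have hdk : DifferentiableAt ℝ (iteratedFDeriv ℝ k ρ) (ζ + s • v) := by
    have h1 : ContDiffAt ℝ 1 (iteratedFDeriv ℝ k ρ) (ζ + s • v) := by
      refine (hρ.contDiffAt (hΩ.mem_nhds hmem)).iteratedFDeriv_right ?_
      have : ((1 : ℕ∞) + k) ≤ ((3:ℕ) : ℕ∞) := by
        rw [show ((3:ℕ):ℕ∞) = ((3:ℕ∞)) from rfl]
        calc (1 : ℕ∞) + k ≤ 1 + 2 := by
              gcongr; exact_mod_cast hk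
          _ = 3 := by norm_num
      exact_mod_cast this
    exact h1.differentiableAt one_ne_zero
  have h2 := hdk.hasFDerivAt.comp_hasDerivAt s hγ
  have h3 := (ContinuousMultilinearMap.apply ℝ (fun _ : Fin k => EuclideanSpace ℂ (Fin n)) ℝ
    (fun _ => v)).hasFDerivAt.comp_hasDerivAt s h2
  have hval : iteratedFDeriv ℝ (k+1) ρ (ζ + s • v) (fun _ => v)
      = fderiv ℝ (iteratedFDeriv ℝ k ρ) (ζ + s • v) v (fun _ => v) := by
    rw [iteratedFDeriv_succ_apply_left]
    rfl
  rw [hval]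
  exact h3

lemma taylor_main (hΩ : IsOpen Ω) (hconv : Convex ℝ Ω) (hρ : ContDiffOn ℝ 3 ρ Ω)
    {z ζ : EuclideanSpace ℂ (Fin n)} (hz : z ∈ Ω) (hζ : ζ ∈ Ω) :
    ∃ w ∈ Ω, ρ z = ρ ζ + iteratedFDeriv ℝ 1 ρ ζ (fun _ => z - ζ)
      + (1/2 : ℝ) * iteratedFDeriv ℝ 2 ρ ζ (fun _ => z - ζ)
      + (1/6 : ℝ) * iteratedFDeriv ℝ 3 ρ w (fun _ => z - ζ) := by
  set v := z - ζ with hv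
  have hmemΩ : ∀ s ∈ Set.Icc (0:ℝ) 1, ζ + s • v ∈ Ω := by
    intro s hs
    have h := hconv hζ hz (sub_nonneg.2 hs.2) hs.1 (by ring)
    have heq : ζ + s • v = (1 - s) • ζ + s • z := by
      rw [hv, smul_sub, sub_smul, one_smul]; abel
    rw [heq]; exact h
  set g : ℝ → ℝ := fun s => ρ (ζ + s • v) with hgdef
  have hg3 : ContDiffOn ℝ 3 g (Set.Icc 0 1) := by
    refine hρ.comp ?_ (fun s hs => hmemΩ s hs)
    exact (contDiff_const.add (contDiff_id.smul contDiff_const)).contDiffOn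
  have hGicc : ∀ k, k ≤ 3 → ∀ s ∈ Set.Icc (0:ℝ) 1,
      iteratedDerivWithin k g (Set.Icc 0 1) s = iteratedFDeriv ℝ k ρ (ζ + s • v) (fun _ => v) := by
    intro k
    induction k with
    | zero =>
      intro _ s _
      rw [iteratedDerivWithin_zero, iteratedFDeriv_zero_apply]
    | succ k ih =>
      intro hk3 s hs
      have hk2 : k ≤ 2 := by omega
      have hud := uniqueDiffOn_Icc_zero_one s hs
      rw [iteratedDerivWithin_succ,
        derivWithin_congr (fun t ht => ih (by omega) t ht) (ih (by omega) s hs)]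
      exact ((hGstep hΩ hρ ζ v hk2 (hmemΩ s hs)).hasDerivWithinAt).derivWithin hud
  have hf' : DifferentiableOn ℝ (iteratedDerivWithin 2 g (Set.Icc 0 1)) (Set.Ioo 0 1) := by
    have hd : DifferentiableOn ℝ (fun t => iteratedFDeriv ℝ 2 ρ (ζ + t • v) (fun _ => v))
        (Set.Ioo (0:ℝ) 1) := fun s hs =>
      ((hGstep hΩ hρ ζ v (by norm_num) (hmemΩ s (Set.Ioo_subset_Icc_self hs))).differentiableAt).differentiableWithinAt
    exact hd.congr fun s hs => hGicc 2 (by norm_num) s (Set.Ioo_subset_Icc_self hs)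
  obtain ⟨s', hs', htay⟩ := taylor_mean_remainder_lagrange (n := 2) (x₀ := 0) (x := 1) (by norm_num)
    (by rw [Set.uIcc_of_le zero_le_one]; exact hg3.of_le (by norm_num))
    (by rw [Set.uIcc_of_le zero_le_one, Set.uIoo_of_le zero_le_one]; exact hf')
  rw [Set.uIoo_of_le zero_le_one] at hs'
  rw [Set.uIcc_of_le zero_le_one] at htay
  refine ⟨ζ + s' • v, hmemΩ s' (Set.Ioo_subset_Icc_self hs'), ?_⟩
  have h0mem : (0:ℝ) ∈ Set.Icc (0:ℝ) 1 := by norm_num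
  rw [taylor_within_apply] at htay
  rw [Finset.sum_range_succ, Finset.sum_range_succ, Finset.sum_range_succ,
    Finset.sum_range_zero] at htay
  rw [hGicc 0 (by norm_num) 0 h0mem, hGicc 1 (by norm_num) 0 h0mem,
    hGicc 2 (by norm_num) 0 h0mem, hGicc 3 le_rfl s' (Set.Ioo_subset_Icc_self hs')] at htay
  have hz1 : g 1 = ρ z := by
    rw [hgdef]
    simp [hv]
  have hζ0 : ∀ k, (fun _ : Fin k => v) = fun _ : Fin k => z - ζ := fun k => rfl
  have hγ0 : ζ + (0:ℝ) • v = ζ := by simp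
  rw [hz1, hγ0] at htay
  norm_num [Nat.factorial] at htay
  rw [hv] at htay ⊢
  simp only [iteratedFDeriv_one_apply]
  linarith [htay]



end Helpers

/-- lower bound for `Re F(z,ζ)` near the diagonal under a uniform
positivity assumption on the Levi form. -/
theorem re_leviPoly_lower_bound (n : ℕ) (hn : 1 ≤ n) (M c : ℝ) (hc : 0 < c) :
    ∃ ε₀ : ℝ, 0 < ε₀ ∧
      ∀ (Ω : Set (EuclideanSpace ℂ (Fin n))) (ρ : EuclideanSpace ℂ (Fin n) → ℝ),
        IsOpen Ω → Convex ℝ Ω → ContDiffOn ℝ 3 ρ Ω → partialsBoundedBy 3 ρ Ω M →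
        (∀ ζ ∈ Ω, ∀ t : EuclideanSpace ℂ (Fin n), c * ‖t‖ ^ 2 ≤ (leviForm ρ ζ t).re) →
        ∀ z ∈ Ω, ∀ ζ ∈ Ω, ‖z - ζ‖ < ε₀ →
          (ρ ζ - ρ z) / 2 + (c / 4) * ‖z - ζ‖ ^ 2 ≤ (leviPoly ρ z ζ).re := by
  have hn0 : (0:ℝ) < (n:ℝ) := by exact_mod_cast hn
  set K : ℝ := 8 * (n:ℝ) ^ 3 * (|M| + 1) with hKdef
  have hK : 0 < K := by
    have h3 : (0:ℝ) < (n:ℝ)^3 := pow_pos hn0 3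
    have := abs_nonneg M
    nlinarith
  refine ⟨3 * c / (2 * K), by positivity, ?_⟩
  intro Ω ρ hΩ hconv hρ hB hLevi z hz ζ hζ hdist
  set v : EuclideanSpace ℂ (Fin n) := z - ζ with hv
  obtain ⟨w, hw, htay⟩ := taylor_main hΩ hconv hρ hz hζ
  have hdiffζ : DifferentiableAt ℝ ρ ζ :=
    (hρ.contDiffAt (hΩ.mem_nhds hζ)).differentiableAt (by norm_num)
  set ReA : ℝ := (∑ j, wD j (cval ρ) ζ * v j).re with hReA
  set ReB : ℝ := (∑ i, ∑ j, wD i (fun w' => wD j (cval ρ) w') ζ * v i * v j).re with hReB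
  set ReL : ℝ := (∑ i, ∑ j, wD i (fun w' => wDbar j (cval ρ) w') ζ * v i * (starRingEnd ℂ) (v j)).re with hReL
  set R : ℝ := iteratedFDeriv ℝ 3 ρ w (fun _ => v) with hR
  have hG1 : iteratedFDeriv ℝ 1 ρ ζ (fun _ => v) = 2 * ReA := by
    rw [iteratedFDeriv_one_apply]
    exact first_order hdiffζ v
  have hG2 : iteratedFDeriv ℝ 2 ρ ζ (fun _ => v) = 2 * ReB + 2 * ReL := by
    rw [iteratedFDeriv_two_apply]
    exact second_order hΩ hρ hζ v
  have e1 : ρ z = ρ ζ + 2 * ReA + (1/2) * (2 * ReB + 2 * ReL) + (1/6) * R := by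
    rw [← hG1, ← hG2, hR]
    exact htay
  have hLv : c * ‖v‖ ^ 2 ≤ ReL := hLevi ζ hζ v
  have hRb : |R| ≤ K * ‖v‖ ^ 3 := third_bound hB hw v
  have hF : (leviPoly ρ z ζ).re = -ReA - (1/2) * ReB := by
    have h1 : (∑ j, wD j (cval ρ) ζ * (ζ j - z j)) = -(∑ j, wD j (cval ρ) ζ * v j) := by
      rw [← Finset.sum_neg_distrib]
      refine Finset.sum_congr rfl fun j _ => ?_
      rw [show (v j : ℂ) = z j - ζ j from rfl]
      ring
    have h2 : (∑ i, ∑ j, wD i (fun w' => wD j (cval ρ) w') ζ * (z i - ζ i) * (z j - ζ j))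
        = ∑ i, ∑ j, wD i (fun w' => wD j (cval ρ) w') ζ * v i * v j := rfl
    rw [leviPoly, h1, h2, Complex.sub_re, Complex.neg_re, Complex.mul_re]
    have hre : ((1:ℂ)/2).re = 1/2 := by norm_num
    have him : ((1:ℂ)/2).im = 0 := by norm_num
    rw [hre, him]
    ring
  rw [hF]
  have hvle : ‖v‖ ≤ 3 * c / (2 * K) := le_of_lt hdist
  have hvcube : K * ‖v‖ ^ 3 ≤ 6 * ((c/4) * ‖v‖ ^ 2) := by
    calc K * ‖v‖ ^ 3 = (K * ‖v‖ ^ 2) * ‖v‖ := by ring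
      _ ≤ (K * ‖v‖ ^ 2) * (3 * c / (2 * K)) := by
          apply mul_le_mul_of_nonneg_left hvle
          positivity
      _ = (3/2) * (c * ‖v‖ ^ 2) := by field_simp
      _ = 6 * ((c/4) * ‖v‖ ^ 2) := by ring
  have hcv2 : 0 ≤ c * ‖v‖ ^ 2 := by positivity
  linarith [e1, hLv, neg_abs_le R, hRb, hvcube, hcv2]
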